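/- Let $x_j$ be a real random variable with finite second moment, $x_j'$ an independent copy, and $U_j(u,v) = \mathbb{E}|u - x_j'| + \mathbb{E}|x_j - v| - |u-v| - \mathbb{E}|x_j - x_j'|$. Then there exists a universal constant $C > 0$ such that $\mathbb{E}[U_j(x_j, x_j')^4] \leq C\, \mathrm{var}(x_j)^2$. -/

import Mathlib

open MeasureTheory

/-- The double-centered distance kernel `U(u,v) = E|u-x'| + E|x-v| - |u-v| - E|x-x'|`
associated with a real distribution `ν`. -/
noncomputable def Ufun (ν : Measure ℝ) (u v : ℝ) : ℝ :=
  (∫ t, |u - t| ∂ν) + (∫ t, |t - v| ∂ν) - |u - v| - ∫ s, ∫ t, |s - t| ∂ν ∂ν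

/-- There is a universal constant `C > 0` such that for every real random variable `x_j`
with finite second moment, `E[U_j(x_j, x_j')⁴] ≤ C var(x_j)²`. -/
theorem stmt13 :
    ∃ C : ℝ, 0 < C ∧
      ∀ (ν : Measure ℝ), IsProbabilityMeasure ν →
        Integrable (fun t : ℝ => t ^ 2) ν →
        (∫ p : ℝ × ℝ, (Ufun ν p.1 p.2) ^ 4 ∂(ν.prod ν))
          ≤ C * (ProbabilityTheory.variance (fun t : ℝ => t) ν) ^ 2 := by
  refine ⟨1600, by norm_num, ?_⟩
  intro ν hprob hsq
  -- basic integrabilities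
  have hid : Integrable (fun t : ℝ => t) ν := by
    refine (hsq.add (integrable_const 1)).mono' ?_ ?_
    · exact aestronglyMeasurable_id
    · refine Filter.Eventually.of_forall fun t => ?_
      have : |t| ≤ t ^ 2 + 1 := by nlinarith [sq_nonneg (|t| - 1), sq_abs t, abs_nonneg t]
      simpa [Real.norm_eq_abs] using this
  have habsid : Integrable (fun t : ℝ => |t|) ν := hid.abs
  -- for every u, t ↦ |u - t| is integrable
  have habs : ∀ u : ℝ, Integrable (fun t : ℝ => |u - t|) ν := by
    intro u
    refine ((integrable_const |u|).add habsid).mono' ?_ ?_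
    · exact (continuous_const.sub continuous_id).abs.aestronglyMeasurable
    · refine Filter.Eventually.of_forall fun t => ?_
      simp only [Real.norm_eq_abs, abs_abs]
      exact abs_sub u t
  set μ0 : ℝ := ∫ t, t ∂ν with hμ0
  set m : ℝ → ℝ := fun u => ∫ t, |u - t| ∂ν with hm
  set M : ℝ := ∫ s, ∫ t, |s - t| ∂ν ∂ν with hM
  set c : ℝ := ∫ t, |t - μ0| ∂ν with hc
  set V : ℝ := ProbabilityTheory.variance (fun t : ℝ => t) ν with hV
  have hcent : Integrable (fun t : ℝ => |t - μ0|) ν := (hid.sub (integrable_const μ0)).abs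
  have hcent2 : Integrable (fun t : ℝ => (t - μ0) ^ 2) ν := by
    have h : (fun t : ℝ => (t - μ0) ^ 2) = fun t : ℝ => t ^ 2 - (2 * μ0) * t + μ0 ^ 2 := by
      funext t; ring
    rw [h]
    exact (hsq.sub (hid.const_mul _)).add (integrable_const _)
  have hc0 : 0 ≤ c := integral_nonneg fun t => abs_nonneg _
  have hm0 : ∀ u, 0 ≤ m u := fun u => integral_nonneg fun t => abs_nonneg _
  -- m u ≤ |u - μ0| + c
  have hm_le : ∀ u, m u ≤ |u - μ0| + c := by
    intro u
    have h1 : ∀ t : ℝ, |u - t| ≤ |u - μ0| + |t - μ0| := by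
      intro t
      calc |u - t| = |(u - μ0) - (t - μ0)| := by ring_nf
        _ ≤ |u - μ0| + |t - μ0| := abs_sub _ _
    calc m u ≤ ∫ t, (|u - μ0| + |t - μ0|) ∂ν :=
          integral_mono (habs u) ((integrable_const _).add hcent) h1
      _ = |u - μ0| + c := by
          rw [integral_add (integrable_const _) hcent, integral_const]
          simp; rfl
  -- m is 1-Lipschitz, hence measurable
  have hm_lip : LipschitzWith 1 m := by
    refine LipschitzWith.of_dist_le_mul fun u u' => ?_
    simp only [Real.dist_eq, NNReal.coe_one, one_mul]
    have hsub : m u - m u' = ∫ t, (|u - t| - |u' - t|) ∂ν :=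
      (integral_sub (habs u) (habs u')).symm
    rw [hsub]
    have h1 : |∫ t, (|u - t| - |u' - t|) ∂ν| ≤ ∫ t, |(|u - t| - |u' - t|)| ∂ν := by
      simpa [Real.norm_eq_abs] using
        norm_integral_le_integral_norm (μ := ν) (fun t => |u - t| - |u' - t|)
    refine h1.trans ?_
    have h2 : ∀ t : ℝ, |(|u - t| - |u' - t|)| ≤ |u - u'| := by
      intro t
      have h3 := abs_abs_sub_abs_le_abs_sub (u - t) (u' - t)
      have h4 : (u - t) - (u' - t) = u - u' := by ring
      rwa [h4] at h3
    calc ∫ t, |(|u - t| - |u' - t|)| ∂ν ≤ ∫ _t, |u - u'| ∂ν :=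
          integral_mono ((habs u).sub (habs u')).abs (integrable_const _) h2
      _ = |u - u'| := by simp
  have hm_meas : Measurable m := hm_lip.continuous.measurable
  have hm_int : Integrable m ν := by
    refine ((hcent.add (integrable_const c))).mono' hm_meas.aestronglyMeasurable ?_
    refine Filter.Eventually.of_forall fun u => ?_
    rw [Real.norm_eq_abs, abs_of_nonneg (hm0 u)]
    exact hm_le u
  have hM0 : 0 ≤ M := integral_nonneg fun s => hm0 s
  have hM_le : M ≤ 2 * c := by
    have h : M = ∫ s, m s ∂ν := rfl
    rw [h]
    calc ∫ s, m s ∂ν ≤ ∫ s, (|s - μ0| + c) ∂ν :=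
          integral_mono hm_int (hcent.add (integrable_const _)) hm_le
      _ = c + c := by rw [integral_add hcent (integrable_const _), integral_const]; simp; rfl
      _ = 2 * c := by ring
  -- rewrite Ufun in terms of m
  have hUeq : ∀ u v : ℝ, Ufun ν u v = (m u - M) + (m v - |u - v|) := by
    intro u v
    have h2 : (∫ t, |t - v| ∂ν) = m v := by
      refine integral_congr_ae (Filter.Eventually.of_forall fun t => ?_)
      exact abs_sub_comm t v
    simp only [Ufun, h2]
    rw [hm, hM]
    ring
  -- the dominating function a
  set a : ℝ → ℝ := fun u => |m u - M| + m u with ha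
  have ha0 : ∀ u, 0 ≤ a u := fun u => add_nonneg (abs_nonneg _) (hm0 u)
  -- key pointwise bounds
  have hkey : ∀ u v : ℝ, abs (m v - |u - v|) ≤ m u := by
    intro u v
    have hsub : m v - |u - v| = ∫ t, (|v - t| - |u - v|) ∂ν := by
      rw [integral_sub (habs v) (integrable_const _), integral_const]
      simp [hm]
    rw [hsub]
    have h1 : |∫ t, (|v - t| - |u - v|) ∂ν| ≤ ∫ t, |(|v - t| - |u - v|)| ∂ν := by
      simpa [Real.norm_eq_abs] using
        norm_integral_le_integral_norm (μ := ν) (fun t => |v - t| - |u - v|)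
    refine h1.trans ?_
    have h2 : ∀ t : ℝ, |(|v - t| - |u - v|)| ≤ |u - t| := by
      intro t
      have h3 := abs_abs_sub_abs_le_abs_sub (v - t) (v - u)
      have h4 : (v - t) - (v - u) = u - t := by ring
      have h5 : |v - u| = |u - v| := abs_sub_comm v u
      rw [h4, h5] at h3
      exact h3
    exact integral_mono ((habs v).sub (integrable_const _)).abs (habs u) h2
  have hUa : ∀ u v : ℝ, |Ufun ν u v| ≤ a u := by
    intro u v
    rw [hUeq u v]
    calc abs ((m u - M) + (m v - |u - v|)) ≤ |m u - M| + abs (m v - |u - v|) := abs_add_le _ _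
      _ ≤ |m u - M| + m u := by have := hkey u v; linarith
  have hUa' : ∀ u v : ℝ, |Ufun ν u v| ≤ a v := by
    intro u v
    have heq2 : Ufun ν u v = (m v - M) + (m u - |v - u|) := by
      rw [hUeq u v, abs_sub_comm v u]; ring
    rw [heq2]
    calc abs ((m v - M) + (m u - |v - u|)) ≤ |m v - M| + abs (m u - |v - u|) := abs_add_le _ _
      _ ≤ |m v - M| + m v := by have := hkey v u; linarith
  -- a u ≤ 2|u-μ0| + 4c, hence a² integrable with explicit bound
  have ha_le : ∀ u, a u ≤ 2 * |u - μ0| + 4 * c := by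
    intro u
    have h1 : |m u - M| ≤ m u + M := by
      have := abs_sub (m u) M
      rw [abs_of_nonneg (hm0 u), abs_of_nonneg hM0] at this
      exact this
    have := hm_le u
    simp only [ha]
    linarith [hM_le]
  have ha_sq_le : ∀ u, a u ^ 2 ≤ 8 * (u - μ0) ^ 2 + 32 * c ^ 2 := by
    intro u
    have h1 : a u ^ 2 ≤ (2 * |u - μ0| + 4 * c) ^ 2 := by
      have := ha_le u
      nlinarith [ha0 u]
    refine h1.trans ?_
    have h2 : |u - μ0| ^ 2 = (u - μ0) ^ 2 := sq_abs _
    nlinarith [sq_nonneg (|u - μ0| - 2 * c)]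
  have hbound_int : Integrable (fun u : ℝ => 8 * (u - μ0) ^ 2 + 32 * c ^ 2) ν :=
    (hcent2.const_mul 8).add (integrable_const _)
  have ha2_int : Integrable (fun u : ℝ => a u ^ 2) ν := by
    refine hbound_int.mono' ?_ ?_
    · exact (((hm_meas.sub measurable_const).abs.add hm_meas).pow_const 2).aestronglyMeasurable
    · refine Filter.Eventually.of_forall fun u => ?_
      rw [Real.norm_eq_abs, abs_of_nonneg (sq_nonneg _)]
      exact ha_sq_le u
  -- variance identities
  have hmemL2 : MemLp (fun t : ℝ => t) 2 ν :=
    (memLp_two_iff_integrable_sq aestronglyMeasurable_id).2 hsq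
  have hVeq : V = ∫ t, (t - μ0) ^ 2 ∂ν := by
    rw [hV, ProbabilityTheory.variance_eq_integral hmemL2.aemeasurable]
  have hV0 : 0 ≤ V := ProbabilityTheory.variance_nonneg _ _
  -- c² ≤ V  (Jensen / Cauchy–Schwarz via nonnegativity of a variance)
  have hc2 : c ^ 2 ≤ V := by
    have hmem : MemLp (fun t : ℝ => |t - μ0|) 2 ν := by
      refine (memLp_two_iff_integrable_sq ?_).2 ?_
      · exact (continuous_id.sub continuous_const).abs.aestronglyMeasurable
      · refine hcent2.congr (Filter.Eventually.of_forall fun t => ?_)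
        exact (sq_abs _).symm
    have hvar := ProbabilityTheory.variance_nonneg (fun t : ℝ => |t - μ0|) ν
    rw [ProbabilityTheory.variance_eq_sub hmem] at hvar
    have h1 : (∫ t, |t - μ0| ^ 2 ∂ν) = ∫ t, (t - μ0) ^ 2 ∂ν :=
      integral_congr_ae (Filter.Eventually.of_forall fun t => sq_abs _)
    have h2 : (∫ t, |t - μ0| ∂ν) = c := rfl
    simp only [Pi.pow_apply] at hvar
    rw [hVeq, ← h1]
    linarith
  -- ∫ a² ≤ 40 V
  have ha2_le : (∫ u, a u ^ 2 ∂ν) ≤ 40 * V := by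
    calc (∫ u, a u ^ 2 ∂ν) ≤ ∫ u, (8 * (u - μ0) ^ 2 + 32 * c ^ 2) ∂ν :=
          integral_mono ha2_int hbound_int ha_sq_le
      _ = 8 * (∫ u, (u - μ0) ^ 2 ∂ν) + 32 * c ^ 2 := by
          rw [integral_add (hcent2.const_mul 8) (integrable_const _),
            integral_const_mul, integral_const]
          simp
      _ = 8 * V + 32 * c ^ 2 := by rw [hVeq]
      _ ≤ 40 * V := by linarith
  have ha2_nonneg : 0 ≤ ∫ u, a u ^ 2 ∂ν := integral_nonneg fun u => sq_nonneg _
  -- final chain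
  have hprod_int : Integrable (fun p : ℝ × ℝ => a p.1 ^ 2 * a p.2 ^ 2) (ν.prod ν) :=
    ha2_int.mul_prod ha2_int
  have hpt : ∀ p : ℝ × ℝ, (Ufun ν p.1 p.2) ^ 4 ≤ a p.1 ^ 2 * a p.2 ^ 2 := by
    intro ⟨u, v⟩
    have h1 := hUa u v
    have h2 := hUa' u v
    have h3 : |Ufun ν u v| * |Ufun ν u v| ≤ a u * a v :=
      mul_le_mul h1 h2 (abs_nonneg _) (ha0 u)
    have h4 : Ufun ν u v ^ 2 = |Ufun ν u v| * |Ufun ν u v| := by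
      rw [← sq_abs]; ring
    have h5 : Ufun ν u v ^ 4 = (Ufun ν u v ^ 2) ^ 2 := by ring
    rw [h5, h4]
    calc (|Ufun ν u v| * |Ufun ν u v|) ^ 2 ≤ (a u * a v) ^ 2 := by
          apply pow_le_pow_left₀ (mul_nonneg (abs_nonneg _) (abs_nonneg _)) h3
      _ = a u ^ 2 * a v ^ 2 := by ring
  calc (∫ p : ℝ × ℝ, (Ufun ν p.1 p.2) ^ 4 ∂(ν.prod ν))
      ≤ ∫ p : ℝ × ℝ, a p.1 ^ 2 * a p.2 ^ 2 ∂(ν.prod ν) := by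
        refine integral_mono_of_nonneg ?_ hprod_int ?_
        · exact Filter.Eventually.of_forall fun p => by positivity
        · exact Filter.Eventually.of_forall hpt
    _ = (∫ u, a u ^ 2 ∂ν) * (∫ u, a u ^ 2 ∂ν) :=
        integral_prod_mul (fun u : ℝ => a u ^ 2) (fun u : ℝ => a u ^ 2)
    _ ≤ (40 * V) * (40 * V) := mul_le_mul ha2_le ha2_le ha2_nonneg (by linarith)
    _ = 1600 * V ^ 2 := by ring
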